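/- Let f be an expanding map generating a full shift with distortion constant K. For any m, probability vector p̄, ε > 0, and any 0 ≤ s < dim_H(G^{f,m}_{p̄}), one has liminf_{n→∞} N^s_∞([0,1) ∩ G^{f,m}_{p̄}(n,ε)) ≥ 1/K^s. -/

import Mathlib

open Set MeasureTheory Filter
open scoped ENNReal Classical

noncomputable section

/-- A similarity transformation of `ℝ`. -/
def IsSimilarity (f : ℝ → ℝ) : Prop := ∃ a b : ℝ, a ≠ 0 ∧ ∀ x, f x = a * x + b

/-- Falconer's class `𝒢^s`: Gδ sets all of whose images under countably many
similarities intersect in a set of Hausdorff dimension at least `s`. -/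
def falconerClass (s : ℝ) : Set (Set ℝ) :=
  {F | IsGδ F ∧ ∀ T : ℕ → ℝ → ℝ, (∀ i, IsSimilarity (T i)) →
    ENNReal.ofReal s ≤ dimH (⋂ i, T i '' F)}

/-- A probability vector indexed by a finite type. -/
def IsProbVector {ι : Type*} [Fintype ι] (p : ι → ℝ) : Prop :=
  (∀ i, 0 ≤ p i) ∧ ∑ i, p i = 1

/-- A dyadic half-open interval `[2^k m, 2^k (m+1))`. -/
def IsDyadic (I : Set ℝ) : Prop :=
  ∃ (k m : ℤ), I = Ico ((2:ℝ) ^ k * m) ((2:ℝ) ^ k * (m + 1))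

/-- The outer measure `M^s_∞` obtained from countable covers by dyadic intervals. -/
def dyadicMeasure (s : ℝ) (A : Set ℝ) : ℝ≥0∞ :=
  ⨅ (I : ℕ → Set ℝ) (_ : ∀ i, IsDyadic (I i)) (_ : A ⊆ ⋃ i, I i),
    ∑' i, volume (I i) ^ s

/-- Extension of a subset of `[0,1)` to `ℝ` by integer translations. -/
def periodize (A : Set ℝ) : Set ℝ := ⋃ k : ℤ, (fun x => x + (k : ℝ)) '' A

/-- An expanding interval map on `[0,1)` with `g` full monotone branches,
generating a full shift on `g` symbols. -/
structure ExpandingFullShift where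
  g : ℕ
  one_lt_g : 1 < g
  branch : Fin g → Set ℝ
  branch_Ico : ∀ i, ∃ a b : ℝ, a < b ∧ branch i = Ico a b
  branch_cover : (⋃ i, branch i) = Ico (0:ℝ) 1
  branch_disjoint : ∀ i j, i ≠ j → Disjoint (branch i) (branch j)
  f : ℝ → ℝ
  f_onto : ∀ i, f '' branch i = Ico (0:ℝ) 1
  f_mono : ∀ i, StrictMonoOn f (branch i) ∨ StrictAntiOn f (branch i)
  f_expanding : ∀ i, ∀ x ∈ branch i, ∀ y ∈ branch i, |x - y| ≤ |f x - f y|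

namespace ExpandingFullShift

variable (E : ExpandingFullShift)

/-- The symbol `0`. -/
def zeroSym : Fin E.g := ⟨0, Nat.lt_trans Nat.one_pos E.one_lt_g⟩

/-- The cylinder `C_{x₁ … x_n} ⊆ [0,1)` determined by a word `w`. -/
def cylinder (w : List (Fin E.g)) : Set ℝ :=
  {x ∈ Ico (0:ℝ) 1 | ∀ k (hk : k < w.length), E.f^[k] x ∈ E.branch (w.get ⟨k, hk⟩)}

/-- A cylinder in some interval `[k, k+1)`, `k ∈ ℤ` (periodic extension of the
cylinder structure to `ℝ`). -/
def IsCylinderZ (C : Set ℝ) : Prop :=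
  ∃ (w : List (Fin E.g)) (k : ℤ), C = (fun x => x + (k : ℝ)) '' E.cylinder w

/-- The outer measure `N^s_∞` obtained from countable covers by cylinders of `E`. -/
def cylMeasure (s : ℝ) (A : Set ℝ) : ℝ≥0∞ :=
  ⨅ (c : ℕ → List (Fin E.g)) (_ : A ⊆ ⋃ i, E.cylinder (c i)),
    ∑' i, volume (E.cylinder (c i)) ^ s

/-- The outer measure `N^s_∞` from covers by cylinders of the periodic extension. -/
def cylMeasureZ (s : ℝ) (A : Set ℝ) : ℝ≥0∞ :=
  ⨅ (c : ℕ → Set ℝ) (_ : ∀ i, E.IsCylinderZ (c i)) (_ : A ⊆ ⋃ i, c i),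
    ∑' i, volume (c i) ^ s

/-- The empirical frequency `τ^f_w(x,n)/(n-m)` of the word `w` (of length `m`)
in the first `n` symbols of the expansion of `x`. -/
def freq {m : ℕ} (w : Fin m → Fin E.g) (x : ℝ) (n : ℕ) : ℝ :=
  (((Finset.range (n - m)).filter
      (fun i => ∀ k : Fin m, E.f^[i + k] x ∈ E.branch (w k))).card : ℝ) / ((n - m : ℕ) : ℝ)

/-- `G^{f,m}_{p̄}`: the set of points whose length-`m` word frequencies converge to `p̄`. -/
def Gset (m : ℕ) (p : (Fin m → Fin E.g) → ℝ) : Set ℝ :=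
  {x ∈ Ico (0:ℝ) 1 | ∀ w : Fin m → Fin E.g,
    Tendsto (fun n => E.freq w x n) atTop (nhds (p w))}

/-- `G^{f,m}_{p̄}(n,ε)`: points whose empirical length-`m` word frequencies at time `n`
are within `ε` of `p̄` componentwise. -/
def GsetApprox (m : ℕ) (p : (Fin m → Fin E.g) → ℝ) (n : ℕ) (ε : ℝ) : Set ℝ :=
  {x ∈ Ico (0:ℝ) 1 | ∀ w : Fin m → Fin E.g, |E.freq w x n - p w| < ε}

/-- `p̄ ∈ A^{f,m}(x)`: the vector `p̄` is an accumulation point of the empirical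
frequency vectors of `x` as `n → ∞`. -/
def IsFreqAccum (m : ℕ) (p : (Fin m → Fin E.g) → ℝ) (x : ℝ) : Prop :=
  MapClusterPt p atTop (fun n => fun w => E.freq w x n)

/-- `x` is `m`-normal to `f`: every length-`m` word occurs with frequency equal to
the length of the corresponding cylinder. -/
def IsNormal (m : ℕ) (x : ℝ) : Prop :=
  ∀ w : Fin m → Fin E.g,
    Tendsto (fun n => E.freq w x n) atTop (nhds (volume (E.cylinder (List.ofFn w))).toReal)

/-- Bounded distortion with constant `K`:
`|C_u||C_v|/K ≤ |C_{uv}| ≤ K |C_u||C_v|` for all words `u, v`. -/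
def HasBoundedDistortion (K : ℝ) : Prop :=
  ∀ u v : List (Fin E.g),
    volume (E.cylinder (u ++ v)) ≤
      ENNReal.ofReal K * (volume (E.cylinder u) * volume (E.cylinder v)) ∧
    volume (E.cylinder u) * volume (E.cylinder v) ≤
      ENNReal.ofReal K * volume (E.cylinder (u ++ v))

/-- Condition (ii): for each `m` there is `p̄` with `dim_H G^{f,m}_{p̄} = 1`, and for
each word `w` of length `m` there are vectors `q̄` with `q_w ≠ p_w` whose `G`-set has
Hausdorff dimension arbitrarily close to `1`. -/
def CondII : Prop :=
  ∀ m : ℕ, 0 < m → ∃ p : (Fin m → Fin E.g) → ℝ, IsProbVector p ∧ dimH (E.Gset m p) = 1 ∧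
    ∀ w : Fin m → Fin E.g, ∀ t : ℝ≥0∞, t < 1 → ∃ q : (Fin m → Fin E.g) → ℝ,
      IsProbVector q ∧ q w ≠ p w ∧ t ≤ dimH (E.Gset m q)

end ExpandingFullShift

namespace StmtNineAux
open ExpandingFullShift

variable (E : ExpandingFullShift)

lemma branch_subset (i : Fin E.g) : E.branch i ⊆ Ico (0:ℝ) 1 :=
  E.branch_cover ▸ subset_iUnion E.branch i

lemma f_mem {x : ℝ} (hx : x ∈ Ico (0:ℝ) 1) : E.f x ∈ Ico (0:ℝ) 1 := by
  rw [← E.branch_cover] at hx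
  obtain ⟨_, ⟨i, rfl⟩, hxi⟩ := hx
  have := E.f_onto i
  rw [← this]
  exact mem_image_of_mem _ hxi

lemma iter_mem (k : ℕ) {x : ℝ} (hx : x ∈ Ico (0:ℝ) 1) : E.f^[k] x ∈ Ico (0:ℝ) 1 := by
  induction k with
  | zero => exact hx
  | succ k ih => rw [Function.iterate_succ_apply']; exact f_mem E ih

lemma mem_cylinder_iff {w : List (Fin E.g)} {x : ℝ} :
    x ∈ E.cylinder w ↔ x ∈ Ico (0:ℝ) 1 ∧ ∀ k, (hk : k < w.length) → E.f^[k] x ∈ E.branch w[k] := by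
  simp [ExpandingFullShift.cylinder, List.get_eq_getElem]

lemma cylinder_nil : E.cylinder [] = Ico (0:ℝ) 1 := by
  ext x; simp [mem_cylinder_iff]

lemma cylinder_subset (w : List (Fin E.g)) : E.cylinder w ⊆ Ico (0:ℝ) 1 := fun _ hx => hx.1

lemma cylinder_append (u v : List (Fin E.g)) :
    E.cylinder (u ++ v) = E.cylinder u ∩ (E.f^[u.length]) ⁻¹' E.cylinder v := by
  ext x
  simp only [mem_cylinder_iff, mem_inter_iff, mem_preimage, List.length_append]
  constructor
  · rintro ⟨hx, h⟩
    refine ⟨⟨hx, fun k hk => ?_⟩, ⟨iter_mem E _ hx, fun k hk => ?_⟩⟩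
    · have := h k (by omega)
      rwa [List.getElem_append_left hk] at this
    · have := h (u.length + k) (by omega)
      rw [← Function.iterate_add_apply]
      rw [List.getElem_append_right (by omega)] at this
      have hidx : u.length + k - u.length = k := by omega
      simp only [hidx] at this
      rwa [Nat.add_comm k u.length]
  · rintro ⟨⟨hx, hu⟩, ⟨_, hv⟩⟩
    refine ⟨hx, fun k hk => ?_⟩
    rcases lt_or_ge k u.length with h | h
    · rw [List.getElem_append_left h]
      exact hu k h
    · rw [List.getElem_append_right h]
      have := hv (k - u.length) (by omega)
      rw [← Function.iterate_add_apply] at this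
      have hidx : k - u.length + u.length = k := by omega
      rwa [hidx] at this

lemma cylinder_cons (a : Fin E.g) (w : List (Fin E.g)) :
    E.cylinder (a :: w) = E.branch a ∩ E.f ⁻¹' E.cylinder w := by
  have h1 : E.cylinder [a] = E.branch a := by
    ext x
    simp only [mem_cylinder_iff, List.length_cons, List.length_nil]
    constructor
    · rintro ⟨hx, h⟩
      have := h 0 (by omega)
      simpa using this
    · intro hx
      refine ⟨branch_subset E a hx, fun k hk => ?_⟩
      interval_cases k
      simpa using hx
  have h2 : (a :: w) = [a] ++ w := rfl
  rw [h2, cylinder_append, h1]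
  simp [Function.iterate_one]

lemma cylinder_ordConnected (w : List (Fin E.g)) : (E.cylinder w).OrdConnected := by
  induction w with
  | nil => rw [cylinder_nil]; exact ordConnected_Ico
  | cons a w ih =>
    rw [cylinder_cons]
    constructor
    intro x hx z hz y hy
    have hbr : (E.branch a).OrdConnected := by
      obtain ⟨c, d, _, hcd⟩ := E.branch_Ico a
      rw [hcd]; exact ordConnected_Ico
    have hyb : y ∈ E.branch a := hbr.out hx.1 hz.1 hy
    refine ⟨hyb, ?_⟩
    have hfx : E.f x ∈ E.cylinder w := hx.2
    have hfz : E.f z ∈ E.cylinder w := hz.2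
    rcases E.f_mono a with hmono | hanti
    · have h1 : E.f x ≤ E.f y := hmono.monotoneOn hx.1 hyb hy.1
      have h2 : E.f y ≤ E.f z := hmono.monotoneOn hyb hz.1 hy.2
      exact ih.out hfx hfz ⟨h1, h2⟩
    · have h1 : E.f z ≤ E.f y := hanti.antitoneOn hyb hz.1 hy.2
      have h2 : E.f y ≤ E.f x := hanti.antitoneOn hx.1 hyb hy.1
      exact ih.out hfz hfx ⟨h1, h2⟩

lemma ediam_le_volume {S : Set ℝ} (hS : S.OrdConnected) (hb : S ⊆ Ico (0:ℝ) 1) :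
    EMetric.diam S ≤ volume S := by
  rcases S.eq_empty_or_nonempty with rfl | hne
  · simp [show EMetric.diam (∅:Set ℝ) = Metric.ediam ∅ from rfl]
  · have hbd : Bornology.IsBounded S := (Metric.isBounded_Ico (0:ℝ) 1).subset hb
    rw [show EMetric.diam S = Metric.ediam S from rfl, Real.ediam_eq hbd]
    have hsub : Ioo (sInf S) (sSup S) ⊆ S := by
      intro y hy
      obtain ⟨a, ha, hay⟩ := (csInf_lt_iff hbd.bddBelow hne).mp hy.1
      obtain ⟨b, hbS, hyb⟩ := (lt_csSup_iff hbd.bddAbove hne).mp hy.2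
      exact hS.out ha hbS ⟨hay.le, hyb.le⟩
    calc ENNReal.ofReal (sSup S - sInf S) = volume (Ioo (sInf S) (sSup S)) := by
          rw [Real.volume_Ioo]
      _ ≤ volume S := measure_mono hsub

lemma freq_shift {m : ℕ} (w : Fin m → Fin E.g) (x : ℝ) (L n : ℕ) (hn : m < n) :
    |E.freq w (E.f^[L] x) n - E.freq w x (n + L)| ≤ 2 * L / ((n - m : ℕ) : ℝ) := by
  classical
  set Q : ℕ → Prop := fun j => ∀ k : Fin m, E.f^[j + k] x ∈ E.branch (w k) with hQ
  set d : ℕ := n - m with hd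
  have hd1 : 1 ≤ d := by omega
  have hnL : n + L - m = d + L := by omega
  have hfilter : (Finset.range d).filter
        (fun i => ∀ k : Fin m, E.f^[i + (k:ℕ)] (E.f^[L] x) ∈ E.branch (w k))
      = (Finset.range d).filter (fun i => Q (i + L)) := by
    apply Finset.filter_congr
    intro i _
    constructor <;> intro h k
    · have := h k
      rwa [← Function.iterate_add_apply, show i + (k:ℕ) + L = i + L + (k:ℕ) by omega] at this
    · have := h k
      rwa [show i + L + (k:ℕ) = i + (k:ℕ) + L by omega, Function.iterate_add_apply] at this
  have hfy : E.freq w (E.f^[L] x) n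
      = (((Finset.range d).filter (fun i => Q (i + L))).card : ℝ) / (d : ℝ) := by
    rw [ExpandingFullShift.freq, ← hd, hfilter]
  have hfx : E.freq w x (n + L)
      = (((Finset.range (d + L)).filter Q).card : ℝ) / ((d + L : ℕ) : ℝ) := by
    rw [ExpandingFullShift.freq, hnL]
  set a := ((Finset.range d).filter (fun i => Q (i + L))).card with ha
  set b := ((Finset.range (d + L)).filter Q).card with hb
  have hab : a ≤ b := by
    have himg : ((Finset.range d).filter (fun i => Q (i + L))).image (· + L)
        ⊆ (Finset.range (d + L)).filter Q := by
      intro j hj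
      simp only [Finset.mem_image, Finset.mem_filter, Finset.mem_range] at hj ⊢
      obtain ⟨i, ⟨hi1, hi2⟩, rfl⟩ := hj
      exact ⟨by omega, hi2⟩
    calc a = (((Finset.range d).filter (fun i => Q (i + L))).image (· + L)).card := by
          rw [Finset.card_image_of_injective _ (add_left_injective L)]
      _ ≤ b := Finset.card_le_card himg
  have hba : b ≤ a + L := by
    have hsub : (Finset.range (d + L)).filter Q
        ⊆ ((Finset.range d).filter (fun i => Q (i + L))).image (· + L) ∪ Finset.range L := by
      intro j hj
      simp only [Finset.mem_filter, Finset.mem_range, Finset.mem_union, Finset.mem_image] at hj ⊢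
      rcases lt_or_ge j L with h | h
      · exact Or.inr h
      · refine Or.inl ⟨j - L, ⟨by omega, ?_⟩, by omega⟩
        rw [show j - L + L = j by omega]; exact hj.2
    calc b ≤ (((Finset.range d).filter (fun i => Q (i + L))).image (· + L)).card
          + (Finset.range L).card := le_trans (Finset.card_le_card hsub) (Finset.card_union_le _ _)
      _ ≤ a + L := by
          rw [Finset.card_image_of_injective _ (add_left_injective L), Finset.card_range]
  have had : a ≤ d := le_trans (Finset.card_filter_le _ _) (by rw [Finset.card_range])
  rw [hfy, hfx]
  have hdpos : (0:ℝ) < (d:ℝ) := by exact_mod_cast hd1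
  have hdLpos : (0:ℝ) < ((d + L : ℕ):ℝ) := by positivity
  rw [abs_le]
  push_cast
  have haR : (a:ℝ) ≤ d := by exact_mod_cast had
  have habR : (a:ℝ) ≤ b := by exact_mod_cast hab
  have hbaR : (b:ℝ) ≤ a + L := by exact_mod_cast hba
  have hLR : (0:ℝ) ≤ L := by positivity
  push_cast at hdLpos
  constructor
  · rw [div_sub_div _ _ (ne_of_gt hdpos) (ne_of_gt hdLpos), neg_le, ← neg_div,
      div_le_div_iff₀ (by positivity) hdpos]
    have h0a : (0:ℝ) ≤ (a:ℝ) := by positivity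
    have h1 := mul_le_mul_of_nonneg_right hbaR (mul_nonneg hdpos.le hdpos.le)
    nlinarith [mul_nonneg (mul_nonneg h0a hLR) hdpos.le, mul_nonneg hLR (mul_nonneg hdpos.le hLR),
      mul_nonneg hLR (mul_nonneg hdpos.le hdpos.le)]
  · rw [div_sub_div _ _ (ne_of_gt hdpos) (ne_of_gt hdLpos),
      div_le_div_iff₀ (by positivity) hdpos]
    have h0a : (0:ℝ) ≤ (a:ℝ) := by positivity
    have h2 := mul_le_mul_of_nonneg_right habR (mul_nonneg hdpos.le hdpos.le)
    have h3 := mul_le_mul_of_nonneg_right haR (mul_nonneg hLR hdpos.le)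
    nlinarith [mul_nonneg hLR (mul_nonneg hdpos.le hLR),
      mul_nonneg hLR (mul_nonneg hdpos.le hdpos.le)]

lemma shift_mem_approx {m : ℕ} (p : (Fin m → Fin E.g) → ℝ) {ε : ℝ} (hε : 0 < ε) (N : ℕ)
    {x : ℝ} (hx : x ∈ Ico (0:ℝ) 1)
    (hx2 : ∀ n, N ≤ n → ∀ w, |E.freq w x n - p w| < ε/2) (L n : ℕ)
    (hn : max N (m + 1 + ⌈4*(L:ℝ)/ε⌉₊) ≤ n) :
    E.f^[L] x ∈ E.GsetApprox m p n ε := by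
  have hnN : N ≤ n := le_trans (le_max_left _ _) hn
  have hnm : m + 1 + ⌈4*(L:ℝ)/ε⌉₊ ≤ n := le_trans (le_max_right _ _) hn
  refine ⟨iter_mem E L hx, fun w => ?_⟩
  have h1 := freq_shift E w x L n (by omega)
  have h2 := hx2 (n + L) (by omega) w
  have hden : 4*(L:ℝ)/ε < ((n - m : ℕ) : ℝ) := by
    have hc : ⌈4*(L:ℝ)/ε⌉₊ < n - m := by omega
    calc 4*(L:ℝ)/ε ≤ (⌈4*(L:ℝ)/ε⌉₊ : ℝ) := Nat.le_ceil _
      _ < ((n - m : ℕ) : ℝ) := by exact_mod_cast hc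
  have hdpos : (0:ℝ) < ((n - m : ℕ) : ℝ) := lt_of_le_of_lt (by positivity) hden
  have herr : 2 * (L:ℝ) / ((n - m : ℕ) : ℝ) ≤ ε/2 := by
    rw [div_le_iff₀ hdpos]
    have hmul : 4*(L:ℝ)/ε * (ε/2) = 2*L := by field_simp; ring
    nlinarith [mul_lt_mul_of_pos_right hden (half_pos hε)]
  calc |E.freq w (E.f^[L] x) n - p w|
      ≤ |E.freq w (E.f^[L] x) n - E.freq w x (n + L)| + |E.freq w x (n + L) - p w| :=
        abs_sub_le _ _ _
    _ < ε/2 + ε/2 := by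
        apply add_lt_add_of_le_of_lt (le_trans h1 herr) h2
    _ = ε := by ring

lemma Gset_subset_iUnion {m : ℕ} (p : (Fin m → Fin E.g) → ℝ) {ε : ℝ} (hε : 0 < ε) :
    E.Gset m p ⊆ ⋃ N : ℕ,
      {x : ℝ | x ∈ Ico (0:ℝ) 1 ∧ ∀ n, N ≤ n → ∀ w, |E.freq w x n - p w| < ε/2} := by
  intro x hx
  obtain ⟨hxI, hxT⟩ := hx
  have hev : ∀ᶠ n in atTop, ∀ w : Fin m → Fin E.g, |E.freq w x n - p w| < ε/2 := by
    rw [eventually_all]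
    intro w
    have := (hxT w).eventually (Metric.ball_mem_nhds (p w) (half_pos hε))
    simpa [Real.dist_eq] using this
  obtain ⟨N, hN⟩ := eventually_atTop.mp hev
  exact mem_iUnion.mpr ⟨N, hxI, fun n hn w => hN n hn w⟩

end StmtNineAux

open ExpandingFullShift in
/-- for `0 ≤ s < dim_H G^{f,m}_{p̄}`,
`liminf_n N^s_∞([0,1) ∩ G^{f,m}_{p̄}(n,ε)) ≥ 1/K^s`. -/
theorem liminf_cylMeasure_unitInterval (E : ExpandingFullShift) (K : ℝ) (hK : 1 ≤ K)
    (hbd : E.HasBoundedDistortion K)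
    (m : ℕ) (hm : 0 < m) (p : (Fin m → Fin E.g) → ℝ) (hp : IsProbVector p)
    (ε : ℝ) (hε : 0 < ε)
    (s : ℝ) (hs0 : 0 ≤ s) (hs : ENNReal.ofReal s < dimH (E.Gset m p)) :
    ENNReal.ofReal (1 / K ^ s)
      ≤ atTop.liminf (fun n => E.cylMeasure s (Ico (0:ℝ) 1 ∩ E.GsetApprox m p n ε)) := by
  classical
  open StmtNineAux in
  rcases eq_or_lt_of_le hs0 with hs0' | hspos
  · -- the case `s = 0` : every cover cost is infinite
    have hall : ∀ n : ℕ, E.cylMeasure s (Ico (0:ℝ) 1 ∩ E.GsetApprox m p n ε) = ⊤ := by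
      intro n
      rw [ExpandingFullShift.cylMeasure]
      refine le_antisymm le_top (le_iInf fun c => le_iInf fun _ => ?_)
      have h1 : ∀ i : ℕ, volume (E.cylinder (c i)) ^ s = 1 := fun i => by
        rw [← hs0', ENNReal.rpow_zero]
      have heq : (⊤:ℝ≥0∞) = ∑' i : ℕ, volume (E.cylinder (c i)) ^ s := by
        calc (⊤:ℝ≥0∞) = ∑' _ : ℕ, (1:ℝ≥0∞) :=
              (ENNReal.tsum_const_eq_top_of_ne_zero one_ne_zero).symm
          _ = ∑' i : ℕ, volume (E.cylinder (c i)) ^ s := tsum_congr fun i => (h1 i).symm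
      exact heq.le
    have : (fun n => E.cylMeasure s (Ico (0:ℝ) 1 ∩ E.GsetApprox m p n ε))
        = fun _ => (⊤:ℝ≥0∞) := funext hall
    rw [this, liminf_const]
    exact le_top
  · by_contra hcon
    push_neg at hcon
    obtain ⟨t, ht1, ht2⟩ := exists_between hcon
    have hK0 : (0:ℝ) < K := lt_of_lt_of_le one_pos hK
    have hKs_pos : (0:ℝ) < K ^ s := Real.rpow_pos_of_pos hK0 s
    have hKs_one : (1:ℝ) ≤ K ^ s := by
      have := Real.rpow_le_rpow_of_exponent_le hK hs0
      rwa [Real.rpow_zero] at this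
    have ht3 : t ≤ 1 := by
      refine le_trans ht2.le (ENNReal.ofReal_le_one.mpr ?_)
      rw [div_le_one hKs_pos]
      exact hKs_one
    have httop : t ≠ ⊤ := ne_top_of_le_ne_top ENNReal.one_ne_top ht3
    set κ : ℝ≥0∞ := ENNReal.ofReal (K ^ s) with hκ
    have hκ0 : κ ≠ 0 := by
      simp [hκ, ENNReal.ofReal_eq_zero, not_le, hKs_pos]
    have hκtop : κ ≠ ⊤ := ENNReal.ofReal_ne_top
    have hκt : κ * t < 1 := by
      have hmul : κ * ENNReal.ofReal (1 / K ^ s) = 1 := by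
        rw [hκ, ← ENNReal.ofReal_mul hKs_pos.le, mul_one_div_cancel (ne_of_gt hKs_pos),
          ENNReal.ofReal_one]
      calc κ * t < κ * ENNReal.ofReal (1 / K ^ s) :=
            (ENNReal.mul_lt_mul_iff_right hκ0 hκtop).mpr ht2
        _ = 1 := hmul
    have hdistpow : ∀ u v : List (Fin E.g),
        volume (E.cylinder (u ++ v)) ^ s
          ≤ κ * (volume (E.cylinder u) ^ s * volume (E.cylinder v) ^ s) := by
      intro u v
      calc volume (E.cylinder (u ++ v)) ^ s
          ≤ (ENNReal.ofReal K * (volume (E.cylinder u) * volume (E.cylinder v))) ^ s :=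
            ENNReal.rpow_le_rpow (hbd u v).1 hs0
        _ = (ENNReal.ofReal K) ^ s
              * (volume (E.cylinder u) ^ s * volume (E.cylinder v) ^ s) := by
            rw [ENNReal.mul_rpow_of_nonneg _ _ hs0, ENNReal.mul_rpow_of_nonneg _ _ hs0]
        _ = κ * (volume (E.cylinder u) ^ s * volume (E.cylinder v) ^ s) := by
            rw [ENNReal.ofReal_rpow_of_pos hK0]
    have hfreq : ∀ M : ℕ, ∃ n, M ≤ n ∧
        E.cylMeasure s (Ico (0:ℝ) 1 ∩ E.GsetApprox m p n ε) < t := by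
      have hfr := frequently_lt_of_liminf_lt (by isBoundedDefault) ht1
      intro M
      obtain ⟨n, hn, hlt⟩ := frequently_atTop.mp hfr M
      exact ⟨n, hn, hlt⟩
    have covers : ∀ M : ℕ, ∃ c : ℕ → List (Fin E.g),
        (∀ y, y ∈ Ico (0:ℝ) 1 → (∀ n, M ≤ n → y ∈ E.GsetApprox m p n ε)
          → y ∈ ⋃ i, E.cylinder (c i))
        ∧ ∑' i, volume (E.cylinder (c i)) ^ s ≤ t := by
      intro M
      obtain ⟨n, hnM, hlt⟩ := hfreq M
      rw [ExpandingFullShift.cylMeasure, iInf_lt_iff] at hlt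
      obtain ⟨c, hlt⟩ := hlt
      rw [iInf_lt_iff] at hlt
      obtain ⟨hc, hlt⟩ := hlt
      exact ⟨c, fun y hy hy2 => hc ⟨hy, hy2 n hnM⟩, hlt.le⟩
    choose cov hcov hcovcost using covers
    set A : ℕ → Set ℝ := fun N =>
      {x : ℝ | x ∈ Ico (0:ℝ) 1 ∧ ∀ n, N ≤ n → ∀ w, |E.freq w x n - p w| < ε/2} with hA
    set NN : ℕ → ℕ → ℕ := fun N L => max N (m + 1 + ⌈4*(L:ℝ)/ε⌉₊) with hNN
    have main : ∀ N j : ℕ, ∃ W : ℕ → List (Fin E.g),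
        ((A N) ⊆ ⋃ i, E.cylinder (W i))
        ∧ ∑' i, volume (E.cylinder (W i)) ^ s ≤ (κ*t)^j * t := by
      intro N j
      induction j with
      | zero =>
        refine ⟨cov (NN N 0), fun x hx => ?_, by simpa using hcovcost (NN N 0)⟩
        apply hcov (NN N 0) x hx.1
        intro n hn
        have := shift_mem_approx E p hε N hx.1 hx.2 0 n hn
        simpa using this
      | succ j ih =>
        obtain ⟨W, hWc, hWcost⟩ := ih
        set e : ℕ ≃ ℕ × ℕ := (Denumerable.eqv (ℕ × ℕ)).symm with he
        refine ⟨fun i => W (e i).1 ++ cov (NN N (W (e i).1).length) (e i).2, ?_, ?_⟩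
        · intro x hx
          obtain ⟨_, ⟨i, rfl⟩, hxi⟩ := hWc hx
          set L := (W i).length with hL
          have hy : E.f^[L] x ∈ ⋃ i', E.cylinder (cov (NN N L) i') := by
            apply hcov (NN N L) _ (iter_mem E L hx.1)
            intro n hn
            exact shift_mem_approx E p hε N hx.1 hx.2 L n hn
          obtain ⟨_, ⟨i', rfl⟩, hyi⟩ := hy
          refine mem_iUnion.mpr ⟨e.symm (i, i'), ?_⟩
          simp only [Equiv.apply_symm_apply]
          rw [cylinder_append]
          exact ⟨hxi, hyi⟩
        · calc ∑' i, volume (E.cylinder (W (e i).1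
                ++ cov (NN N (W (e i).1).length) (e i).2)) ^ s
              = ∑' q : ℕ × ℕ, volume (E.cylinder (W q.1
                ++ cov (NN N (W q.1).length) q.2)) ^ s := by
                exact Equiv.tsum_eq e (fun q : ℕ × ℕ =>
                  volume (E.cylinder (W q.1 ++ cov (NN N (W q.1).length) q.2)) ^ s)
            _ ≤ ∑' q : ℕ × ℕ, κ * (volume (E.cylinder (W q.1)) ^ s
                * volume (E.cylinder (cov (NN N (W q.1).length) q.2)) ^ s) :=
                ENNReal.tsum_le_tsum fun q => hdistpow _ _
            _ = ∑' i : ℕ, ∑' i' : ℕ, κ * (volume (E.cylinder (W i)) ^ s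
                * volume (E.cylinder (cov (NN N (W i).length) i')) ^ s) := ENNReal.tsum_prod'
            _ = ∑' i : ℕ, κ * volume (E.cylinder (W i)) ^ s
                * ∑' i' : ℕ, volume (E.cylinder (cov (NN N (W i).length) i')) ^ s := by
                refine tsum_congr fun i => ?_
                rw [ENNReal.tsum_mul_left, ENNReal.tsum_mul_left, ← mul_assoc]
            _ ≤ ∑' i : ℕ, κ * volume (E.cylinder (W i)) ^ s * t :=
                ENNReal.tsum_le_tsum fun i => mul_le_mul_right (hcovcost _) _
            _ = κ * t * ∑' i : ℕ, volume (E.cylinder (W i)) ^ s := by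
                rw [ENNReal.tsum_mul_right, ENNReal.tsum_mul_left]
                ring
            _ ≤ κ * t * ((κ*t)^j * t) := mul_le_mul_right hWcost _
            _ = (κ*t)^(j+1) * t := by ring
    choose W hWcov hWcost using main
    have hdiamvol : ∀ N j i : ℕ, EMetric.diam (E.cylinder (W N j i))
        ≤ volume (E.cylinder (W N j i)) := fun N j i =>
      ediam_le_volume (cylinder_ordConnected E _) (cylinder_subset E _)
    have hdiam : ∀ N j i : ℕ,
        EMetric.diam (E.cylinder (W N j i)) ≤ ((κ*t)^j * t) ^ (1/s) := by
      intro N j i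
      have h1 : volume (E.cylinder (W N j i)) ^ s ≤ (κ*t)^j * t :=
        le_trans (ENNReal.le_tsum i) (hWcost N j)
      have h2 : volume (E.cylinder (W N j i)) ≤ ((κ*t)^j * t) ^ (1/s) := by
        have h3 := ENNReal.rpow_le_rpow h1 (by positivity : (0:ℝ) ≤ 1/s)
        rwa [← ENNReal.rpow_mul, mul_one_div_cancel (ne_of_gt hspos),
          ENNReal.rpow_one] at h3
      exact le_trans (hdiamvol N j i) h2
    have hgeom : Tendsto (fun j : ℕ => (κ*t)^j * t) atTop (nhds 0) := by
      have h1 := ENNReal.tendsto_pow_atTop_nhds_zero_of_lt_one hκt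
      have h2 := ENNReal.Tendsto.mul_const h1 (Or.inr httop)
      rwa [zero_mul] at h2
    have hr0 : Tendsto (fun j : ℕ => ((κ*t)^j * t) ^ (1/s)) atTop (nhds 0) := by
      have hc := ENNReal.continuous_rpow_const (y := 1/s)
      have := (hc.tendsto 0).comp hgeom
      rwa [Function.comp_def, ENNReal.zero_rpow_of_pos (by positivity)] at this
    have hμA : ∀ N : ℕ, μH[s] (A N) = 0 := by
      intro N
      refine le_antisymm ?_ zero_le
      have hle := MeasureTheory.Measure.hausdorffMeasure_le_liminf_tsum (ι := fun _ : ℕ => ℕ) s (A N)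
          (fun j : ℕ => ((κ*t)^j * t) ^ (1/s)) hr0
          (fun j i => E.cylinder (W N j i))
          (Eventually.of_forall fun j i => hdiam N j i)
          (Eventually.of_forall fun j => hWcov N j)
      refine le_trans hle ?_
      have hbound : ∀ j : ℕ,
          (∑' i : ℕ, EMetric.diam (E.cylinder (W N j i)) ^ s) ≤ (κ*t)^j * t := fun j =>
        le_trans (ENNReal.tsum_le_tsum fun i =>
          ENNReal.rpow_le_rpow (hdiamvol N j i) hs0) (hWcost N j)
      calc atTop.liminf (fun j : ℕ => ∑' i : ℕ, EMetric.diam (E.cylinder (W N j i)) ^ s)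
          ≤ atTop.liminf (fun j : ℕ => (κ*t)^j * t) :=
            liminf_le_liminf (Eventually.of_forall hbound)
        _ = 0 := hgeom.liminf_eq
    have hGzero : μH[s] (E.Gset m p) = 0 := by
      refine le_antisymm ?_ zero_le
      calc μH[s] (E.Gset m p) ≤ μH[s] (⋃ N : ℕ, A N) :=
            measure_mono (Gset_subset_iUnion E p hε)
        _ ≤ ∑' N : ℕ, μH[s] (A N) := measure_iUnion_le _
        _ = 0 := by simp [hμA]
    have hdim : dimH (E.Gset m p) ≤ ENNReal.ofReal s := by
      have hcoe : ((s.toNNReal : ℝ)) = s := Real.coe_toNNReal s hs0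
      have hne : μH[((s.toNNReal : ℝ))] (E.Gset m p) ≠ ⊤ := by
        rw [hcoe, hGzero]
        exact ENNReal.zero_ne_top
      have h := dimH_le_of_hausdorffMeasure_ne_top hne
      have hcoe2 : ((s.toNNReal : ℝ≥0∞)) = ENNReal.ofReal s := rfl
      rwa [hcoe2] at h
    exact absurd hs (not_lt.mpr hdim)
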